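/- Let $(A_m)_{m\in\mathbb{Z}}$ be a uniformly bounded sequence of invertible bounded operators on a Banach space $X$ admitting an exponential dichotomy, and let $1\le p<\infty$. For each sequence $(y_n)_{n\in\mathbb{Z}}\subset X$ with $\sum_{n\in\mathbb{Z}}\|y_{n+1}-A_ny_n\|^p<\infty$, there exists a unique sequence $(x_n)_{n\in\mathbb{Z}}$ satisfying $x_{n+1}=A_nx_n$ for all $n$ and $\sum_{n\in\mathbb{Z}}\|x_n-y_n\|^p<\infty$. -/

import Mathlib

open scoped ENNReal NNReal

section Aux

variable {X : Type*} [NormedAddCommGroup X] [NormedSpace ℝ X]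

private lemma aux_holder (p : ℝ) (hp : 1 ≤ p) (w u : ℤ → ℝ≥0∞) :
    (∑' k, w k * u k) ^ p ≤ (∑' k, w k) ^ (p - 1) * ∑' k, w k * u k ^ p := by
  have hp0 : (0:ℝ) < p := lt_of_lt_of_le one_pos hp
  have h1 : ∑' k, w k * u k ≤ (∑' k, w k) ^ (1 - p⁻¹) * (∑' k, w k * u k ^ p) ^ p⁻¹ := by
    rw [ENNReal.tsum_eq_iSup_sum]
    refine iSup_le fun s => ?_
    refine le_trans (ENNReal.inner_le_weight_mul_Lp_of_nonneg s hp w u) ?_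
    gcongr
    · exact sub_nonneg.2 (inv_le_one_of_one_le₀ hp)
    · exact ENNReal.sum_le_tsum s
    · exact ENNReal.sum_le_tsum s
  calc (∑' k, w k * u k) ^ p
      ≤ ((∑' k, w k) ^ (1 - p⁻¹) * (∑' k, w k * u k ^ p) ^ p⁻¹) ^ p :=
        ENNReal.rpow_le_rpow h1 hp0.le
    _ = (∑' k, w k) ^ (p - 1) * ∑' k, w k * u k ^ p := by
        rw [ENNReal.mul_rpow_of_nonneg _ _ hp0.le, ← ENNReal.rpow_mul, ← ENNReal.rpow_mul,
          inv_mul_cancel₀ hp0.ne', ENNReal.rpow_one, sub_mul, one_mul,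
          inv_mul_cancel₀ hp0.ne']

private lemma aux_geom {lam : ℝ} (hlam : 0 < lam) :
    Summable (fun j : ℤ => Real.exp (-lam * |(j:ℝ)|)) := by
  have hb : Real.exp (-lam) < 1 := Real.exp_lt_one_iff.2 (by linarith)
  have hnat : Summable (fun n : ℕ => Real.exp (-lam) ^ n) :=
    summable_geometric_of_lt_one (Real.exp_pos _).le hb
  have key : ∀ n : ℕ, Real.exp (-lam * |((n:ℤ):ℝ)|) = Real.exp (-lam) ^ n := by
    intro n
    rw [← Real.exp_nat_mul]
    push_cast
    rw [abs_of_nonneg (by positivity)]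
    ring_nf
  refine Summable.of_nat_of_neg ?_ ?_
  · simpa using (hnat.congr (fun n => (key n).symm))
  · refine (hnat.congr (fun n => ?_)).congr (fun n => rfl)
    rw [← key n]
    push_cast
    rw [abs_neg]

private lemma aux_traj (A : ℤ → X ≃L[ℝ] X) (E : ℤ → ℤ → X →L[ℝ] X)
    (hrec : ∀ m n, E (m + 1) n = ((A m : X →L[ℝ] X)).comp (E m n))
    (w : ℤ → X) (hw : ∀ n, w (n + 1) = A n (w n))
    (hid : ∀ n, E n n = ContinuousLinearMap.id ℝ X) :
    ∀ m n, E m n (w n) = w m := by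
  intro m n
  induction m using Int.inductionOn' with
  | b => exact n
  | zero => rw [hid]; rfl
  | succ k hk ih =>
      rw [hrec k n]
      simp only [ContinuousLinearMap.comp_apply, ContinuousLinearEquiv.coe_coe, ih, hw k]
  | pred k hk ih =>
      apply (A (k - 1)).injective
      have h1 : E ((k - 1) + 1) n = ((A (k-1) : X →L[ℝ] X)).comp (E (k-1) n) := hrec (k-1) n
      rw [sub_add_cancel] at h1
      have h2 := congrArg (fun (T : X →L[ℝ] X) => T (w n)) h1
      simp only [ContinuousLinearMap.comp_apply, ContinuousLinearEquiv.coe_coe] at h2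
      rw [ih] at h2
      have h3 : w ((k - 1) + 1) = A (k-1) (w (k-1)) := hw (k-1)
      rw [sub_add_cancel] at h3
      rw [← h2, ← h3]

private lemma aux_comm (A : ℤ → X ≃L[ℝ] X) (E : ℤ → ℤ → X →L[ℝ] X) (P : ℤ → X →L[ℝ] X)
    (hrec : ∀ m n, E (m + 1) n = ((A m : X →L[ℝ] X)).comp (E m n))
    (hcomm : ∀ m, (P (m + 1)).comp (A m : X →L[ℝ] X) = ((A m : X →L[ℝ] X)).comp (P m))
    (hid : ∀ n, E n n = ContinuousLinearMap.id ℝ X) :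
    ∀ m n (v : X), P m (E m n v) = E m n (P n v) := by
  intro m n v
  induction m using Int.inductionOn' with
  | b => exact n
  | zero => rw [hid]; rfl
  | succ k hk ih =>
      have h2 := congrArg (fun (T : X →L[ℝ] X) => T (E k n v)) (hcomm k)
      simp only [ContinuousLinearMap.comp_apply, ContinuousLinearEquiv.coe_coe] at h2
      rw [hrec k n]
      simp only [ContinuousLinearMap.comp_apply, ContinuousLinearEquiv.coe_coe]
      rw [h2, ih]
  | pred k hk ih =>
      apply (A (k - 1)).injective
      have h1 : E ((k - 1) + 1) n = ((A (k-1) : X →L[ℝ] X)).comp (E (k-1) n) := hrec (k-1) n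
      rw [sub_add_cancel] at h1
      have hc := hcomm (k - 1)
      rw [sub_add_cancel] at hc
      have h2 := congrArg (fun (T : X →L[ℝ] X) => T (E (k-1) n v)) hc
      simp only [ContinuousLinearMap.comp_apply, ContinuousLinearEquiv.coe_coe] at h2
      have h3 := congrArg (fun (T : X →L[ℝ] X) => T v) h1
      simp only [ContinuousLinearMap.comp_apply, ContinuousLinearEquiv.coe_coe] at h3
      have h4 := congrArg (fun (T : X →L[ℝ] X) => T (P n v)) h1
      simp only [ContinuousLinearMap.comp_apply, ContinuousLinearEquiv.coe_coe] at h4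
      calc (A (k-1)) (P (k-1) (E (k-1) n v)) = P k (A (k-1) (E (k-1) n v)) := h2.symm
    _ = P k (E k n v) := by rw [← h3]
    _ = E k n (P n v) := ih
    _ = (A (k-1)) (E (k-1) n (P n v)) := by rw [h4]

end Aux

/-- The sequence `A` of bounded operators admits an exponential dichotomy: there exist
an evolution family `E`, projections `P` commuting with the dynamics and constants
`C, lam > 0` with the usual exponential bounds. -/
def ExpDichotomy {X : Type*} [NormedAddCommGroup X] [NormedSpace ℝ X]
    (A : ℤ → X →L[ℝ] X) : Prop :=
  ∃ (E : ℤ → ℤ → X →L[ℝ] X) (P : ℤ → X →L[ℝ] X) (C lam : ℝ),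
    0 < C ∧ 0 < lam ∧
    (∀ n, E n n = ContinuousLinearMap.id ℝ X) ∧
    (∀ m n, E (m + 1) n = (A m).comp (E m n)) ∧
    (∀ m, (P m).comp (P m) = P m) ∧
    (∀ m, (P (m + 1)).comp (A m) = (A m).comp (P m)) ∧
    (∀ m n, n ≤ m → ‖(E m n).comp (P n)‖ ≤ C * Real.exp (-lam * ((m - n : ℤ) : ℝ))) ∧
    (∀ m n, m ≤ n → ‖(E m n).comp (ContinuousLinearMap.id ℝ X - P n)‖ ≤
      C * Real.exp (-lam * ((n - m : ℤ) : ℝ)))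

/-- `ℓ^p`-shadowing for linear systems: if the defect of `(y n)` is `p`-summable, there is a
unique true trajectory of the linear system at `p`-summable distance from `(y n)`. -/
theorem linear_lp_shadowing {X : Type*} [NormedAddCommGroup X]
    [NormedSpace ℝ X] [CompleteSpace X]
    (A : ℤ → X ≃L[ℝ] X) (M : ℝ) (hM : ∀ m, ‖(A m : X →L[ℝ] X)‖ ≤ M)
    (hED : ExpDichotomy fun m => (A m : X →L[ℝ] X))
    (p : ℝ) (hp : 1 ≤ p) (y : ℤ → X)
    (hy : Summable fun n : ℤ => ‖y (n + 1) - A n (y n)‖ ^ p) :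
    ∃! x : ℤ → X, (∀ n, x (n + 1) = A n (x n)) ∧
      Summable fun n : ℤ => ‖x n - y n‖ ^ p := by
  obtain ⟨E, P, C, lam, hC, hlam, hid, hrec, hproj, hcomm, hstab, hunst⟩ := hED
  simp only [] at hrec hcomm hstab hunst
  have hp0 : (0:ℝ) < p := lt_of_lt_of_le one_pos hp
  -- the defect sequence
  set z : ℤ → X := fun k => y (k + 1) - A k (y k) with hzdef
  -- Green's function
  set G : ℤ → ℤ → X →L[ℝ] X := fun n j =>
    if j ≤ n then -((E n j).comp (P j))
    else (E n j).comp (ContinuousLinearMap.id ℝ X - P j) with hGdef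
  have hGbound : ∀ n j, ‖G n j‖ ≤ C * Real.exp (-lam * |((n - j : ℤ) : ℝ)|) := by
    intro n j
    by_cases h : j ≤ n
    · have := hstab n j h
      rw [hGdef]
      simp only [h, if_true, norm_neg]
      rwa [abs_of_nonneg (by exact_mod_cast sub_nonneg.2 h)]
    · push_neg at h
      have := hunst n j h.le
      rw [hGdef]
      simp only [not_le.2 h, if_false]
      rw [abs_of_nonpos (by exact_mod_cast sub_nonpos.2 h.le)]
      have hcast : -((n - j : ℤ) : ℝ) = ((j - n : ℤ) : ℝ) := by push_cast; ring
      rwa [hcast]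
  -- elementary bound
  have hzb : ∀ k, ‖z k‖ ≤ 1 + ‖z k‖ ^ p := by
    intro k
    rcases le_or_gt (‖z k‖) 1 with h | h
    · have : (0:ℝ) ≤ ‖z k‖ ^ p := Real.rpow_nonneg (norm_nonneg _) _
      linarith
    · have h2 : ‖z k‖ ^ (1:ℝ) ≤ ‖z k‖ ^ p :=
        Real.rpow_le_rpow_of_exponent_le h.le hp
      rw [Real.rpow_one] at h2
      linarith
  -- geometric weights
  have hgeom := aux_geom hlam
  have hgeom_shift : ∀ a : ℤ, Summable (fun k : ℤ => Real.exp (-lam * |((a - 1 - k : ℤ) : ℝ)|)) := by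
    intro a
    have := (Equiv.subLeft (a - 1)).summable_iff.2 hgeom
    simpa [Function.comp_def] using this
  have hexp_le_one : ∀ t : ℝ, Real.exp (-lam * |t|) ≤ 1 := by
    intro t
    rw [Real.exp_le_one_iff]
    have : (0:ℝ) ≤ lam * |t| := mul_nonneg hlam.le (abs_nonneg _)
    linarith
  -- summable majorant
  have hmaj : ∀ n : ℤ, Summable (fun k : ℤ =>
      C * (Real.exp (-lam * |((n - 1 - k : ℤ) : ℝ)|) + ‖z k‖ ^ p)) := by
    intro n
    exact ((hgeom_shift n).add hy).mul_left C
  have hterm : ∀ n k : ℤ, ‖G n (k+1) (z k)‖ ≤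
      C * Real.exp (-lam * |((n - 1 - k : ℤ) : ℝ)|) * ‖z k‖ := by
    intro n k
    refine le_trans ((G n (k+1)).le_opNorm (z k)) ?_
    have hb := hGbound n (k+1)
    rw [show (n - (k+1) : ℤ) = n - 1 - k by ring] at hb
    exact mul_le_mul_of_nonneg_right hb (norm_nonneg _)
  have hterm2 : ∀ n k : ℤ, C * Real.exp (-lam * |((n - 1 - k : ℤ) : ℝ)|) * ‖z k‖ ≤
      C * (Real.exp (-lam * |((n - 1 - k : ℤ) : ℝ)|) + ‖z k‖ ^ p) := by
    intro n k
    set e := Real.exp (-lam * |((n - 1 - k : ℤ) : ℝ)|) with he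
    have he0 : 0 ≤ e := (Real.exp_pos _).le
    have he1 : e ≤ 1 := hexp_le_one _
    have hb0 : (0:ℝ) ≤ ‖z k‖ := norm_nonneg _
    have hbp : (0:ℝ) ≤ ‖z k‖ ^ p := Real.rpow_nonneg hb0 _
    rw [mul_assoc]
    refine mul_le_mul_of_nonneg_left ?_ hC.le
    calc e * ‖z k‖ ≤ e * (1 + ‖z k‖ ^ p) := mul_le_mul_of_nonneg_left (hzb k) he0
      _ = e + e * ‖z k‖ ^ p := by ring
      _ ≤ e + ‖z k‖ ^ p := by nlinarith
  have hCe : ∀ n : ℤ, Summable (fun k : ℤ =>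
      C * Real.exp (-lam * |((n - 1 - k : ℤ) : ℝ)|) * ‖z k‖) := by
    intro n
    refine Summable.of_nonneg_of_le (fun k => by positivity) (fun k => hterm2 n k) (hmaj n)
  have hsummand : ∀ n : ℤ, Summable (fun k : ℤ => ‖G n (k+1) (z k)‖) := by
    intro n
    exact Summable.of_nonneg_of_le (fun k => norm_nonneg _)
      (fun k => le_trans (hterm n k) (hterm2 n k)) (hmaj n)
  have hGsum : ∀ n : ℤ, Summable (fun k : ℤ => G n (k+1) (z k)) :=
    fun n => (hsummand n).of_norm
  set d : ℤ → X := fun n => ∑' k, G n (k+1) (z k) with hddef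
  set x : ℤ → X := fun n => y n + d n with hxdef
  -- x is a trajectory
  have htraj : ∀ n, x (n + 1) = A n (x n) := by
    intro n
    have hAd : Summable (fun k : ℤ => (A n : X →L[ℝ] X) (G n (k+1) (z k))) :=
      (hGsum n).map ((A n : X →L[ℝ] X) : X →+ X) (A n : X →L[ℝ] X).continuous
    have hmap : (A n : X →L[ℝ] X) (d n) = ∑' k, (A n : X →L[ℝ] X) (G n (k+1) (z k)) := by
      simp only [hddef]
      exact (A n : X →L[ℝ] X).map_tsum (hGsum n)
    have hEid : ∀ (a : ℤ) (u : X), E a a u = u := by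
      intro a u; rw [hid a]; rfl
    have hEstep : ∀ (a b : ℤ) (u : X), (A a : X →L[ℝ] X) (E a b u) = E (a+1) b u := by
      intro a b u
      have := congrArg (fun T : X →L[ℝ] X => T u) (hrec a b)
      simp only [ContinuousLinearMap.comp_apply] at this
      exact this.symm
    have hpt : ∀ k : ℤ, G (n+1) (k+1) (z k) - (A n : X →L[ℝ] X) (G n (k+1) (z k)) =
        if k = n then -(z n) else 0 := by
      intro k
      by_cases hk : k = n
      · subst hk
        simp only [if_true]
        have e1 : G (k+1) (k+1) (z k) = -(P (k+1) (z k)) := by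
          simp only [hGdef, le_refl, if_true, ContinuousLinearMap.neg_apply,
            ContinuousLinearMap.comp_apply, hEid]
        have e2 : G k (k+1) (z k) = E k (k+1) (z k - P (k+1) (z k)) := by
          simp only [hGdef, show ¬((k:ℤ)+1 ≤ k) by omega, if_false,
            ContinuousLinearMap.comp_apply, ContinuousLinearMap.sub_apply,
            ContinuousLinearMap.id_apply]
        rw [e1, e2, hEstep, hEid]
        abel
      · simp only [hk, if_false]
        by_cases hk2 : k + 1 ≤ n
        · have e1 : G (n+1) (k+1) (z k) = -(E (n+1) (k+1) (P (k+1) (z k))) := by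
            simp only [hGdef, show (k:ℤ)+1 ≤ n+1 by omega, if_true,
              ContinuousLinearMap.neg_apply, ContinuousLinearMap.comp_apply]
          have e2 : G n (k+1) (z k) = -(E n (k+1) (P (k+1) (z k))) := by
            simp only [hGdef, hk2, if_true, ContinuousLinearMap.neg_apply,
              ContinuousLinearMap.comp_apply]
          rw [e1, e2, map_neg, hEstep]
          abel
        · have e1 : G (n+1) (k+1) (z k) =
              E (n+1) (k+1) (z k - P (k+1) (z k)) := by
            simp only [hGdef, show ¬((k:ℤ)+1 ≤ n+1) by omega, if_false,
              ContinuousLinearMap.comp_apply, ContinuousLinearMap.sub_apply,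
              ContinuousLinearMap.id_apply]
          have e2 : G n (k+1) (z k) = E n (k+1) (z k - P (k+1) (z k)) := by
            simp only [hGdef, hk2, if_false, ContinuousLinearMap.comp_apply,
              ContinuousLinearMap.sub_apply, ContinuousLinearMap.id_apply]
          rw [e1, e2, hEstep]
          abel
    have hdiff : d (n+1) - (A n : X →L[ℝ] X) (d n) = -(z n) := by
      rw [hmap]
      have hd1 : d (n+1) = ∑' k, G (n+1) (k+1) (z k) := by simp only [hddef]
      rw [hd1, ← Summable.tsum_sub (hGsum (n+1)) hAd]
      rw [tsum_congr hpt]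
      exact tsum_ite_eq n (fun _ => -(z n))
    simp only [hxdef]
    have hzn : z n = y (n+1) - A n (y n) := rfl
    have hcoe : (A n : X →L[ℝ] X) (d n) = A n (d n) := rfl
    rw [hcoe] at hdiff
    rw [sub_eq_iff_eq_add] at hdiff
    rw [map_add, hdiff, hzn]
    abel
  -- summability of ‖d n‖ ^ p
  have hdsum : Summable (fun n : ℤ => ‖d n‖ ^ p) := by
    set W : ℤ → ℝ≥0∞ := fun j => ENNReal.ofReal (Real.exp (-lam * |(j:ℝ)|)) with hWdef
    set U : ℤ → ℝ≥0∞ := fun k => (‖z k‖₊ : ℝ≥0∞) with hUdef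
    set S := ∑' j, W j with hSdef
    have hS : S ≠ ⊤ := by
      simp only [hSdef, hWdef]
      rw [← ENNReal.ofReal_tsum_of_nonneg (fun j => (Real.exp_pos _).le) hgeom]
      exact ENNReal.ofReal_ne_top
    have hUp : ∑' k, U k ^ p ≠ ⊤ := by
      have hcoe : ∀ k : ℤ, U k ^ p = ((‖z k‖₊ ^ p : ℝ≥0) : ℝ≥0∞) := fun k =>
        (ENNReal.coe_rpow_of_nonneg _ hp0.le).symm
      rw [tsum_congr hcoe, ENNReal.tsum_coe_ne_top_iff_summable, ← NNReal.summable_coe]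
      refine hy.congr (fun k => ?_)
      rw [NNReal.coe_rpow, coe_nnnorm]
    have hreal : ∀ n : ℤ, ‖d n‖ ≤
        ∑' k : ℤ, C * Real.exp (-lam * |((n - 1 - k : ℤ) : ℝ)|) * ‖z k‖ := by
      intro n
      have h1 : ‖d n‖ ≤ ∑' k, ‖G n (k+1) (z k)‖ := by
        simp only [hddef]; exact norm_tsum_le_tsum_norm (hsummand n)
      exact le_trans h1 (Summable.tsum_le_tsum (fun k => hterm n k) (hsummand n) (hCe n))
    have henn : ∀ n : ℤ, (‖d n‖₊ : ℝ≥0∞) ≤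
        ENNReal.ofReal C * ∑' k : ℤ, W (n - 1 - k) * U k := by
      intro n
      rw [show (‖d n‖₊ : ℝ≥0∞) = ENNReal.ofReal ‖d n‖ from (ofReal_norm _).symm]
      refine le_trans (ENNReal.ofReal_le_ofReal (hreal n)) ?_
      rw [ENNReal.ofReal_tsum_of_nonneg (fun k => by positivity) (hCe n),
        ← ENNReal.tsum_mul_left]
      refine ENNReal.tsum_le_tsum (fun k => ?_)
      rw [ENNReal.ofReal_mul (by positivity), ENNReal.ofReal_mul hC.le, mul_assoc]
      simp only [hWdef, hUdef, ofReal_norm]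
      exact le_refl _
    have hUS : ∀ n : ℤ, ∑' k : ℤ, W (n - 1 - k) = S := by
      intro n
      have h := (Equiv.subLeft (n-1)).tsum_eq W
      simp only [Equiv.subLeft_apply] at h
      exact h
    have hWS : ∀ k : ℤ, ∑' n : ℤ, W (n - 1 - k) = S := by
      intro k
      have h := (Equiv.subRight (1+k)).tsum_eq W
      simp only [Equiv.subRight_apply] at h
      rw [hSdef, ← h]
      exact tsum_congr fun n => by rw [show n - 1 - k = n - (1+k) by ring]
    have key : ∑' n : ℤ, (‖d n‖₊ : ℝ≥0∞) ^ p ≤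
        (ENNReal.ofReal C) ^ p * (S ^ (p-1) * ((∑' k : ℤ, U k ^ p) * S)) := by
      calc ∑' n : ℤ, (‖d n‖₊ : ℝ≥0∞) ^ p
          ≤ ∑' n : ℤ, (ENNReal.ofReal C) ^ p * (∑' k : ℤ, W (n - 1 - k) * U k) ^ p := by
            refine ENNReal.tsum_le_tsum (fun n => ?_)
            rw [← ENNReal.mul_rpow_of_nonneg _ _ hp0.le]
            exact ENNReal.rpow_le_rpow (henn n) hp0.le
        _ ≤ ∑' n : ℤ, (ENNReal.ofReal C) ^ p *
              (S ^ (p-1) * ∑' k : ℤ, W (n - 1 - k) * U k ^ p) := by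
            refine ENNReal.tsum_le_tsum (fun n => ?_)
            refine mul_le_mul_right ?_ _
            have h := aux_holder p hp (fun k => W (n - 1 - k)) U
            rwa [hUS n] at h
        _ = (ENNReal.ofReal C) ^ p *
              (S ^ (p-1) * ∑' n : ℤ, ∑' k : ℤ, W (n - 1 - k) * U k ^ p) := by
            rw [ENNReal.tsum_mul_left, ENNReal.tsum_mul_left]
        _ = (ENNReal.ofReal C) ^ p *
              (S ^ (p-1) * ∑' k : ℤ, ∑' n : ℤ, W (n - 1 - k) * U k ^ p) := by
            rw [ENNReal.tsum_comm]
        _ = (ENNReal.ofReal C) ^ p * (S ^ (p-1) * ((∑' k : ℤ, U k ^ p) * S)) := by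
            congr 2
            rw [← ENNReal.tsum_mul_right]
            refine tsum_congr fun k => ?_
            rw [ENNReal.tsum_mul_right, hWS k, mul_comm]
    have hfin : ∑' n : ℤ, (‖d n‖₊ : ℝ≥0∞) ^ p ≠ ⊤ := by
      refine ne_top_of_le_ne_top ?_ key
      refine ENNReal.mul_ne_top (ENNReal.rpow_ne_top_of_nonneg hp0.le ENNReal.ofReal_ne_top) ?_
      refine ENNReal.mul_ne_top (ENNReal.rpow_ne_top_of_nonneg (by linarith) hS) ?_
      exact ENNReal.mul_ne_top hUp hS
    have hfin2 : ∑' n : ℤ, ((‖d n‖₊ ^ p : ℝ≥0) : ℝ≥0∞) ≠ ⊤ := by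
      rw [tsum_congr (fun n : ℤ => ENNReal.coe_rpow_of_nonneg (‖d n‖₊) hp0.le)]
      exact hfin
    have hsum := NNReal.summable_coe.2 (ENNReal.tsum_coe_ne_top_iff_summable.1 hfin2)
    refine hsum.congr (fun n => ?_)
    rw [NNReal.coe_rpow, coe_nnnorm]
  have hxsum : Summable (fun n : ℤ => ‖x n - y n‖ ^ p) := by
    refine hdsum.congr (fun n => ?_)
    have : x n - y n = d n := by rw [hxdef]; exact add_sub_cancel_left _ _
    rw [this]
  refine ⟨x, ⟨htraj, hxsum⟩, ?_⟩
  -- uniqueness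
  rintro x' ⟨htraj', hxsum'⟩
  set w : ℤ → X := fun n => x' n - x n with hwdef
  have hwtraj : ∀ n, w (n+1) = A n (w n) := by
    intro n
    simp only [hwdef]
    rw [htraj' n, htraj n, ← map_sub]
  have hwE := aux_traj A E hrec w hwtraj hid
  have hPE := aux_comm A E P hrec hcomm hid
  have hnorm_small : ∀ {u : ℤ → X}, Summable (fun n : ℤ => ‖u n - y n‖ ^ p) →
      ∀ ε : ℝ, 0 < ε → ∀ᶠ m in Filter.cofinite, ‖u m - y m‖ < ε := by
    intro u hu ε hε
    have h1 := hu.tendsto_cofinite_zero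
    have hpow : (0:ℝ) < ε ^ p := Real.rpow_pos_of_pos hε _
    filter_upwards [h1.eventually (gt_mem_nhds hpow)] with m hm
    by_contra hcon
    push_neg at hcon
    have := Real.rpow_le_rpow hε.le hcon hp0.le
    linarith
  have hsmall : ∀ ε : ℝ, 0 < ε → ∀ᶠ m in Filter.cofinite, ‖w m‖ < ε := by
    intro ε hε
    filter_upwards [hnorm_small hxsum' (ε/2) (by linarith),
      hnorm_small hxsum (ε/2) (by linarith)] with m h1 h2
    have heq : w m = (x' m - y m) - (x m - y m) := by simp only [hwdef]; abel
    calc ‖w m‖ = ‖(x' m - y m) - (x m - y m)‖ := by rw [heq]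
      _ ≤ ‖x' m - y m‖ + ‖x m - y m‖ := norm_sub_le _ _
      _ < ε := by linarith
  have hwzero : ∀ n, w n = 0 := by
    intro n
    have hexp1 : ∀ a b : ℤ, a ≤ b → Real.exp (-lam * ((b - a : ℤ):ℝ)) ≤ 1 := by
      intro a b hab
      rw [Real.exp_le_one_iff]
      have h1 : (0:ℝ) ≤ ((b - a : ℤ):ℝ) := by exact_mod_cast sub_nonneg.2 hab
      nlinarith
    have hkey : ∀ v : X, (∀ ε : ℝ, 0 < ε → ‖v‖ < ε) → v = 0 := by
      intro v hv
      by_contra hcon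
      have h0 : 0 < ‖v‖ := norm_pos_iff.2 hcon
      exact absurd (hv _ h0) (lt_irrefl _)
    have hstable : P n (w n) = 0 := by
      refine hkey _ (fun ε hε => ?_)
      have hev := hsmall (ε / C) (by positivity)
      rw [Filter.eventually_cofinite] at hev
      obtain ⟨m, hm1, hm2⟩ := ((Set.Iic_infinite n).diff hev).nonempty
      simp only [Set.mem_setOf_eq, not_not] at hm2
      have heqn : P n (w n) = ((E n m).comp (P m)) (w m) := by
        rw [← hwE n m]
        exact hPE n m (w m)
      calc ‖P n (w n)‖ = ‖((E n m).comp (P m)) (w m)‖ := by rw [heqn]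
        _ ≤ ‖(E n m).comp (P m)‖ * ‖w m‖ := ContinuousLinearMap.le_opNorm _ _
        _ ≤ (C * Real.exp (-lam * ((n - m : ℤ):ℝ))) * ‖w m‖ :=
            mul_le_mul_of_nonneg_right (hstab n m hm1) (norm_nonneg _)
        _ ≤ C * ‖w m‖ := by
            have h1 : C * Real.exp (-lam * ((n - m : ℤ):ℝ)) ≤ C := by
              have := hexp1 m n hm1
              nlinarith
            exact mul_le_mul_of_nonneg_right h1 (norm_nonneg _)
        _ < C * (ε / C) := mul_lt_mul_of_pos_left hm2 hC
        _ = ε := by field_simp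
    have hunstable : w n - P n (w n) = 0 := by
      refine hkey _ (fun ε hε => ?_)
      have hev := hsmall (ε / C) (by positivity)
      rw [Filter.eventually_cofinite] at hev
      obtain ⟨m, hm1, hm2⟩ := ((Set.Ici_infinite n).diff hev).nonempty
      simp only [Set.mem_setOf_eq, not_not] at hm2
      have heqn : w n - P n (w n) =
          ((E n m).comp (ContinuousLinearMap.id ℝ X - P m)) (w m) := by
        have h1 : w n = E n m (w m) := (hwE n m).symm
        have h2 : P n (w n) = E n m (P m (w m)) := by rw [h1]; exact hPE n m (w m)
        rw [h2, h1, ← map_sub]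
        rfl
      calc ‖w n - P n (w n)‖
          = ‖((E n m).comp (ContinuousLinearMap.id ℝ X - P m)) (w m)‖ := by rw [heqn]
        _ ≤ ‖(E n m).comp (ContinuousLinearMap.id ℝ X - P m)‖ * ‖w m‖ :=
            ContinuousLinearMap.le_opNorm _ _
        _ ≤ (C * Real.exp (-lam * ((m - n : ℤ):ℝ))) * ‖w m‖ :=
            mul_le_mul_of_nonneg_right (hunst n m hm1) (norm_nonneg _)
        _ ≤ C * ‖w m‖ := by
            have h1 : C * Real.exp (-lam * ((m - n : ℤ):ℝ)) ≤ C := by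
              have := hexp1 n m hm1
              nlinarith
            exact mul_le_mul_of_nonneg_right h1 (norm_nonneg _)
        _ < C * (ε / C) := mul_lt_mul_of_pos_left hm2 hC
        _ = ε := by field_simp
    have := hunstable
    rw [hstable, sub_zero] at this
    exact this
  funext n
  have := hwzero n
  simp only [hwdef] at this
  exact sub_eq_zero.1 this
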